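/- Let H be a real Hilbert space and let a, b be closed subspaces of H with a not contained in b. Then there exists a unit vector u ∈ a with u ∉ b such that the function s : C(H) → H defined by s(c) = P_c(u), where P_c is the orthogonal projection onto the closed subspace c, is an ℝH-state on the orthomodular lattice C(H) satisfying ‖s(a)‖ = 1 and ‖s(b)‖ < 1. Consequently, C(H) admits a strong set of ℝH-states. -/

import Mathlib

/-- A closed subspace of a real Hilbert space `H`: an element of `C(H)`. -/
def ClosedSubspace (H : Type*) [NormedAddCommGroup H] [InnerProductSpace ℝ H] : Type _ :=
  {K : Submodule ℝ H // IsClosed (K : Set H)}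

namespace ClosedSubspace

variable {H : Type*} [NormedAddCommGroup H] [InnerProductSpace ℝ H]

/-- The greatest element of `C(H)`: the whole space. -/
def top : ClosedSubspace H := ⟨⊤, by rw [Submodule.top_coe]; exact isClosed_univ⟩

/-- The join in `C(H)`: the topological closure of the subspace sum. -/
def sup (a b : ClosedSubspace H) : ClosedSubspace H :=
  ⟨(a.1 ⊔ b.1).topologicalClosure, Submodule.isClosed_topologicalClosure _⟩

/-- The orthocomplement in `C(H)`. -/
noncomputable def compl (a : ClosedSubspace H) : ClosedSubspace H :=
  ⟨a.1ᗮ, Submodule.isClosed_orthogonal _⟩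

/-- The partial order of `C(H)`: inclusion. -/
def le (a b : ClosedSubspace H) : Prop := a.1 ≤ b.1

/-- A real-Hilbert-space-valued (ℝH) state on the orthomodular lattice `C(H)`,
with values in `H` itself: `‖s(1)‖ = 1`, `s` is additive on orthogonal pairs,
and `s` sends orthogonal pairs to orthogonal vectors. -/
def IsRHState (s : ClosedSubspace H → H) : Prop :=
  ‖s top‖ = 1 ∧
    (∀ a b : ClosedSubspace H, le a (compl b) → s (sup a b) = s a + s b) ∧
    (∀ a b : ClosedSubspace H, le a (compl b) → inner ℝ (s a) (s b) = (0 : ℝ))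

variable [CompleteSpace H]

/-- The map `c ↦ P_c u`, where `P_c` is the orthogonal projection onto the
closed subspace `c`. -/
noncomputable def projState (u : H) (c : ClosedSubspace H) : H :=
  haveI : CompleteSpace c.1 := c.2.completeSpace_coe
  (c.1.orthogonalProjectionOnto u : H)

theorem projState_isRHState {u : H} (hu : ‖u‖ = 1) : IsRHState (projState u) := by
  refine ⟨?_, ?_, ?_⟩
  · have : projState u top = u := by
      haveI : CompleteSpace (top : ClosedSubspace H).1 := (top : ClosedSubspace H).2.completeSpace_coe
      exact Submodule.starProjection_eq_self_iff.2 trivial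
    rw [this, hu]
  · intro c d h
    haveI : CompleteSpace c.1 := c.2.completeSpace_coe
    haveI : CompleteSpace d.1 := d.2.completeSpace_coe
    haveI : CompleteSpace (sup c d).1 := (sup c d).2.completeSpace_coe
    have hdc : d.1 ≤ c.1ᗮ :=
      le_trans (Submodule.le_orthogonal_orthogonal d.1) (Submodule.orthogonal_le h)
    have hx : u - (projState u c + projState u d) ∈ ((c.1 ⊔ d.1).topologicalClosure)ᗮ := by
      have h1 : u - (projState u c + projState u d) ∈ (c.1 ⊔ d.1)ᗮ := by
        rw [← Submodule.inf_orthogonal]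
        constructor
        · have : u - (projState u c + projState u d)
              = (u - projState u c) - projState u d := by abel
          rw [this]
          exact Submodule.sub_mem _ (Submodule.sub_starProjection_mem_orthogonal u)
            (hdc (Submodule.orthogonalProjectionOnto d.1 u).2)
        · have : u - (projState u c + projState u d)
              = (u - projState u d) - projState u c := by abel
          rw [this]
          exact Submodule.sub_mem _ (Submodule.sub_starProjection_mem_orthogonal u)
            (h (Submodule.orthogonalProjectionOnto c.1 u).2)
      rw [← Submodule.orthogonal_orthogonal_eq_closure]
      exact Submodule.le_orthogonal_orthogonal _ h1
    refine Submodule.eq_starProjection_of_mem_of_inner_eq_zero (K := (sup c d).1) ?_ ?_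
    · exact Submodule.add_mem _
        (Submodule.le_topologicalClosure _ (Submodule.mem_sup_left (Submodule.orthogonalProjectionOnto c.1 u).2))
        (Submodule.le_topologicalClosure _ (Submodule.mem_sup_right (Submodule.orthogonalProjectionOnto d.1 u).2))
    · intro w hw
      rw [real_inner_comm]
      exact hx w hw
  · intro c d h
    haveI : CompleteSpace c.1 := c.2.completeSpace_coe
    haveI : CompleteSpace d.1 := d.2.completeSpace_coe
    have h1 : projState u c ∈ d.1ᗮ := h (Submodule.orthogonalProjectionOnto c.1 u).2
    rw [real_inner_comm]
    exact h1 (projState u d) (Submodule.orthogonalProjectionOnto d.1 u).2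

theorem projState_lt_one {u : H} (hu : ‖u‖ = 1) {d : ClosedSubspace H} (hud : u ∉ d.1) :
    ‖projState u d‖ < 1 := by
  haveI : CompleteSpace d.1 := d.2.completeSpace_coe
  set p : H := projState u d with hp
  have hq : u - p ∈ d.1ᗮ := Submodule.sub_starProjection_mem_orthogonal u
  have hqne : u - p ≠ 0 := by
    intro h0
    exact hud (by rw [show u = p from by rw [← sub_eq_zero]; exact h0]; exact (Submodule.orthogonalProjectionOnto d.1 u).2)
  have hinner : (inner ℝ p (u - p) : ℝ) = 0 :=
    hq p (Submodule.orthogonalProjectionOnto d.1 u).2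
  have hpy : ‖u‖ ^ 2 = ‖p‖ ^ 2 + ‖u - p‖ ^ 2 := by
    have e : p + (u - p) = u := by abel
    have h' := norm_add_sq_real p (u - p)
    rw [e, hinner] at h'
    linarith
  have hqpos : 0 < ‖u - p‖ ^ 2 := pow_pos (norm_pos_iff.2 hqne) 2
  have : ‖p‖ ^ 2 < 1 := by nlinarith [hu]
  nlinarith [norm_nonneg p]

theorem main_exists (a b : ClosedSubspace H) (hab : ¬ le a b) :
    ∃ u : H, ‖u‖ = 1 ∧ u ∈ a.1 ∧ u ∉ b.1 ∧
      IsRHState (projState u) ∧ ‖projState u a‖ = 1 ∧ ‖projState u b‖ < 1 := by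
  obtain ⟨v, hva, hvb⟩ := SetLike.not_le_iff_exists.1 hab
  have hv0 : v ≠ 0 := fun h => hvb (h ▸ b.1.zero_mem)
  set u : H := ‖v‖⁻¹ • v with hu
  have hun : ‖u‖ = 1 := by
    rw [hu, norm_smul, norm_inv, norm_norm, inv_mul_cancel₀ (norm_ne_zero_iff.2 hv0)]
  have hua : u ∈ a.1 := a.1.smul_mem _ hva
  have hub : u ∉ b.1 := by
    intro h
    apply hvb
    have : v = ‖v‖ • u := by
      rw [hu, smul_smul, mul_inv_cancel₀ (norm_ne_zero_iff.2 hv0), one_smul]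
    rw [this]
    exact b.1.smul_mem _ h
  refine ⟨u, hun, hua, hub, projState_isRHState hun, ?_, projState_lt_one hun hub⟩
  haveI : CompleteSpace a.1 := a.2.completeSpace_coe
  have : projState u a = u := Submodule.starProjection_eq_self_iff.2 hua
  rw [this, hun]

end ClosedSubspace

open ClosedSubspace in
/-- If `a`, `b` are closed subspaces of a real Hilbert space `H` with `a` not
contained in `b`, there is a unit vector `u ∈ a \ b` such that `s(c) = P_c u`
is an ℝH-state on `C(H)` with `‖s(a)‖ = 1` and `‖s(b)‖ < 1`. Consequently
`C(H)` admits a strong set of ℝH-states. -/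
theorem stmt_19 {H : Type*} [NormedAddCommGroup H] [InnerProductSpace ℝ H] [CompleteSpace H]
    (a b : ClosedSubspace H) (hab : ¬ le a b) :
    (∃ u : H, ‖u‖ = 1 ∧ u ∈ a.1 ∧ u ∉ b.1 ∧
      IsRHState (projState u) ∧ ‖projState u a‖ = 1 ∧ ‖projState u b‖ < 1) ∧
    ∃ S : Set (ClosedSubspace H → H), S.Nonempty ∧ (∀ s ∈ S, IsRHState s) ∧
      ∀ c d : ClosedSubspace H, ∃ s ∈ S, ((‖s c‖ = 1 → ‖s d‖ = 1) → le c d) := by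
  obtain ⟨u, hun, hua, hub, hstate, hsa, hsb⟩ := main_exists a b hab
  refine ⟨⟨u, hun, hua, hub, hstate, hsa, hsb⟩, {s | IsRHState s}, ⟨projState u, hstate⟩,
    fun s hs => hs, fun c d => ?_⟩
  by_cases hcd : le c d
  · exact ⟨projState u, hstate, fun _ => hcd⟩
  · obtain ⟨w, _, _, _, hst, hc, hd⟩ := main_exists c d hcd
    exact ⟨projState w, hst, fun himp => absurd (himp hc) (ne_of_lt hd)⟩
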